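/- arXiv:2602.15701 — 3 statements merged into one kernel-verified Lean document; each statement's English description precedes it below -/
import Mathlib

section
/- Let $1 < p < \infty$ and let $(Y,d_Y,\mu_Y)$ be a metric measure space with $\mu_Y$ a doubling measure. Fix $x_0 \in Y$ and $r_0 > 0$. If $\liminf_{r\to 0^+} \mu_Y(B(x_0,r))/r^p < \infty$, then the variational $p$-capacity of the condenser $(\{x_0\}, Y\setminus B(x_0,r_0); Y)$ is zero. -/
open MeasureTheory Metric Set ENNReal Filter Topology

def IsDoubling {Y : Type*} [MetricSpace Y] [MeasurableSpace Y] (μ : Measure Y) (C : ℝ) : Prop :=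
  ∀ (x : Y) (r : ℝ), 0 < r →
    0 < μ (Metric.ball x r) ∧
      μ (Metric.ball x (2 * r)) ≤ ENNReal.ofReal C * μ (Metric.ball x r) ∧
      μ (Metric.ball x (2 * r)) < ⊤

noncomputable def codimContent {Y : Type*} [MetricSpace Y] [MeasurableSpace Y]
    (μ : Measure Y) (θ R : ℝ) (A : Set Y) : ℝ≥0∞ :=
  ⨅ (c : ℕ → Y) (ρ : ℕ → ℝ) (_ : ∀ i, 0 < ρ i ∧ ρ i ≤ R)
    (_ : A ⊆ ⋃ i, Metric.ball (c i) (ρ i)),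
    ∑' i, μ (Metric.ball (c i) (ρ i)) / ENNReal.ofReal (ρ i ^ θ)

/-- `g` is an upper gradient of `u` on `U`: for every curve in `U` parametrized by
arclength (i.e. `1`-Lipschitz on `[0, L]`), `|u(γ L) - u(γ 0)| ≤ ∫_γ g`. -/
def IsUpperGradientOn {Y : Type*} [MetricSpace Y] (u g : Y → ℝ) (U : Set Y) : Prop :=
  ∀ (L : ℝ) (γ : ℝ → Y), 0 ≤ L → LipschitzOnWith 1 γ (Set.Icc 0 L) →
    Set.MapsTo γ (Set.Icc 0 L) U →
    |u (γ L) - u (γ 0)| ≤ ∫ t in (0:ℝ)..L, g (γ t)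

noncomputable def varCap {Y : Type*} [MetricSpace Y] [MeasurableSpace Y]
    (μ : Measure Y) (p : ℝ) (E F U : Set Y) : ℝ≥0∞ :=
  ⨅ (u : Y → ℝ) (g : Y → ℝ) (_ : Measurable g) (_ : ∀ x, 0 ≤ g x)
    (_ : IsUpperGradientOn u g U) (_ : ∀ x ∈ E, 1 ≤ u x) (_ : ∀ x ∈ F, u x ≤ 0),
    ∫⁻ x in U, ENNReal.ofReal (g x ^ p) ∂μ

noncomputable def sobCap {Y : Type*} [MetricSpace Y] [MeasurableSpace Y]
    (μ : Measure Y) (p : ℝ) (A : Set Y) : ℝ≥0∞ :=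
  ⨅ (u : Y → ℝ) (g : Y → ℝ) (_ : Measurable u) (_ : Measurable g) (_ : ∀ x, 0 ≤ g x)
    (_ : IsUpperGradientOn u g Set.univ) (_ : ∀ x ∈ A, 1 ≤ u x),
    ∫⁻ x, (ENNReal.ofReal (|u x| ^ p) + ENNReal.ofReal (g x ^ p)) ∂μ

def PoincareIneq {Y : Type*} [MetricSpace Y] [MeasurableSpace Y]
    (μ : Measure Y) (p CP lam : ℝ) : Prop :=
  ∀ (x : Y) (r : ℝ) (u g : Y → ℝ), 0 < r → Measurable g → (∀ y, 0 ≤ g y) →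
    IsUpperGradientOn u g Set.univ →
    ⨍ y in Metric.ball x r, |u y - ⨍ z in Metric.ball x r, u z ∂μ| ∂μ ≤
      CP * r * (⨍ y in Metric.ball x (lam * r), g y ^ p ∂μ) ^ (1 / p)

def IsMinimalUG {Y : Type*} [MetricSpace Y] [MeasurableSpace Y]
    (μ : Measure Y) (p : ℝ) (u g : Y → ℝ) : Prop :=
  Measurable g ∧ (∀ x, 0 ≤ g x) ∧ IsUpperGradientOn u g Set.univ ∧
    ∀ g' : Y → ℝ, Measurable g' → (∀ x, 0 ≤ g' x) → IsUpperGradientOn u g' Set.univ →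
      ∫⁻ x, ENNReal.ofReal (g x ^ p) ∂μ ≤ ∫⁻ x, ENNReal.ofReal (g' x ^ p) ∂μ


lemma tent_ug {Y : Type*} [MetricSpace Y] (x0 : Y) {ρ : ℝ} (hρ : 0 < ρ) :
    IsUpperGradientOn (fun x => max 0 (1 - dist x x0 / ρ))
      ((Metric.closedBall x0 ρ).indicator (fun _ => 1 / ρ)) Set.univ := by
  intro L γ hL hγ _
  set f : ℝ → ℝ := fun t => dist (γ t) x0 with hf
  set m : ℝ → ℝ := fun t => min (f t) ρ with hm
  have hmlip : LipschitzOnWith 1 m (Icc 0 L) := by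
    have h1 : LipschitzOnWith 1 f (Icc 0 L) := by
      intro a ha b hb
      have := hγ ha hb
      simp only [ENNReal.coe_one, one_mul] at this ⊢
      calc edist (f a) (f b) = ENNReal.ofReal (|dist (γ a) x0 - dist (γ b) x0|) := by
            rw [edist_dist, Real.dist_eq]
        _ ≤ edist (γ a) (γ b) := by
            rw [edist_dist]
            exact ENNReal.ofReal_le_ofReal (abs_dist_sub_le _ _ _)
        _ ≤ edist a b := this
    intro a ha b hb
    calc edist (m a) (m b) ≤ edist (f a) (f b) := by
          rw [edist_dist, edist_dist]
          exact ENNReal.ofReal_le_ofReal (by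
            rw [Real.dist_eq, Real.dist_eq]
            exact abs_min_sub_min_le_max .. |>.trans (by simp [abs_sub_comm]))
      _ ≤ 1 * edist a b := h1 ha hb
  have hγc : ContinuousOn γ (Icc 0 L) := hγ.continuousOn
  have hfc : ContinuousOn f (Icc 0 L) := by
    rw [hf]; exact (continuous_id.dist continuous_const).comp_continuousOn hγc
  set S : Set ℝ := {t ∈ Icc 0 L | f t ≤ ρ} with hS
  have hSclosed : IsClosed S := by
    have : S = Icc 0 L ∩ f ⁻¹' (Iic ρ) := by ext t; simp [hS, and_comm]
    rw [this]
    exact ContinuousOn.preimage_isClosed_of_isClosed hfc isClosed_Icc isClosed_Iic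
  have hSfin : volume S < ⊤ := by
    calc volume S ≤ volume (Icc 0 L) := measure_mono (fun t ht => ht.1)
      _ < ⊤ := by simp
  -- key: |m L - m 0| ≤ vol S
  have key : |m L - m 0| ≤ (volume S).toReal := by
    set a := min (m 0) (m L)
    set b := max (m 0) (m L)
    have hmc : ContinuousOn m (Icc 0 L) := by
      rw [hm]; exact (continuous_id.min continuous_const).comp_continuousOn hfc
    have hsub : Ioo a b ⊆ m '' S := by
      intro s hs
      have : s ∈ uIcc (m 0) (m L) := Ioo_subset_Icc_self hs
      obtain ⟨t, ht, hmt⟩ := intermediate_value_uIcc (by rwa [uIcc_of_le hL]) this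
      rw [uIcc_of_le hL] at ht
      refine ⟨t, ⟨ht, ?_⟩, hmt⟩
      have hsρ : s < ρ := lt_of_lt_of_le hs.2 (by
        simp only [b, hm]; exact max_le (min_le_right _ _) (min_le_right _ _))
      by_contra hc
      push_neg at hc
      rw [hm] at hmt
      simp only [min_def] at hmt
      rw [if_neg (by linarith)] at hmt
      exact (ne_of_lt hsρ) hmt.symm
    have h1 : volume (Ioo a b) ≤ volume S := by
      calc volume (Ioo a b) ≤ volume (m '' S) := measure_mono hsub
        _ ≤ volume S := by
            have := (hmlip.mono (fun t ht => ht.1 : S ⊆ Icc 0 L)).hausdorffMeasure_image_le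
              (d := 1) zero_le_one
            rwa [hausdorffMeasure_real, ENNReal.coe_one, ENNReal.one_rpow, one_mul] at this
    have h2 : b - a ≤ (volume S).toReal := by
      have := ENNReal.toReal_mono hSfin.ne h1
      rcases le_or_gt a b with hab | hab
      · rwa [Real.volume_Ioo, ENNReal.toReal_ofReal (by linarith)] at this
      · have : b - a ≤ 0 := by linarith
        exact this.trans ENNReal.toReal_nonneg
    calc |m L - m 0| = b - a := by
          rcases le_total (m 0) (m L) with h | h
          · rw [abs_of_nonneg (by linarith)]; simp [a, b, max_eq_right h, min_eq_left h]
          · rw [abs_of_nonpos (by linarith)]; simp only [a, b, max_eq_left h, min_eq_right h]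
            ring
      _ ≤ _ := h2
  -- express u along the curve
  have hu : ∀ t : ℝ, max 0 (1 - dist (γ t) x0 / ρ) = (ρ - m t) / ρ := by
    intro t
    show max 0 (1 - dist (γ t) x0 / ρ) = (ρ - min (f t) ρ) / ρ
    rcases le_total (f t) ρ with h | h
    · rw [min_eq_left h, max_eq_right]
      · rw [hf]; field_simp
      · rw [sub_nonneg, div_le_one hρ]; exact h
    · rw [min_eq_right h, max_eq_left]
      · simp
      · rw [sub_nonpos, le_div_iff₀ hρ, one_mul]; exact h
  -- compute the integral
  have hvol : volume (S ∩ Ioc 0 L) = volume S := by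
    refine le_antisymm (measure_mono inter_subset_left) ?_
    calc volume S ≤ volume ((S ∩ Ioc 0 L) ∪ {0}) := by
          apply measure_mono
          intro t ht
          rcases eq_or_ne t 0 with rfl | h0
          · exact Or.inr rfl
          · exact Or.inl ⟨ht, lt_of_le_of_ne ht.1.1 (Ne.symm h0), ht.1.2⟩
      _ ≤ volume (S ∩ Ioc 0 L) + volume ({0} : Set ℝ) := measure_union_le _ _
      _ = volume (S ∩ Ioc 0 L) := by simp
  have hint : ∫ t in (0:ℝ)..L, ((closedBall x0 ρ).indicator (fun _ => 1 / ρ)) (γ t)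
      = (volume S).toReal * (1 / ρ) := by
    rw [intervalIntegral.integral_of_le hL]
    have heq : EqOn (fun t => ((closedBall x0 ρ).indicator (fun _ => 1 / ρ)) (γ t))
        ((S ∩ Ioc 0 L).indicator (fun _ => 1 / ρ)) (Ioc 0 L) := by
      intro t ht
      by_cases hd : f t ≤ ρ
      · have h1 : γ t ∈ closedBall x0 ρ := mem_closedBall.mpr hd
        have h2 : t ∈ S ∩ Ioc 0 L := ⟨⟨Ioc_subset_Icc_self ht, hd⟩, ht⟩
        simp only [indicator_of_mem h1, indicator_of_mem h2]
      · have h1 : γ t ∉ closedBall x0 ρ := fun hc => hd (mem_closedBall.mp hc)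
        have h2 : t ∉ S ∩ Ioc 0 L := fun hc => hd hc.1.2
        simp only [indicator_of_notMem h1, indicator_of_notMem h2]
    rw [setIntegral_congr_fun measurableSet_Ioc heq,
      setIntegral_indicator (hSclosed.measurableSet.inter measurableSet_Ioc),
      setIntegral_const]
    rw [inter_comm (Ioc 0 L) _, inter_assoc, inter_self, measureReal_def, hvol]
    simp [smul_eq_mul]
  simp only
  rw [hu, hu, hint]
  have : (ρ - m L) / ρ - (ρ - m 0) / ρ = (m 0 - m L) / ρ := by rw [div_sub_div_same]; congr 1; ring
  rw [this, abs_div, abs_of_pos hρ, abs_sub_comm, div_le_iff₀ hρ]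
  calc |m L - m 0| ≤ (volume S).toReal := key
    _ = (volume S).toReal * (1/ρ) * ρ := by field_simp

lemma indic_integrable {Y : Type*} [MetricSpace Y] (x0 : Y) (ρ c L : ℝ) (hL : 0 ≤ L)
    (γ : ℝ → Y) (hγ : LipschitzOnWith 1 γ (Set.Icc 0 L)) :
    IntervalIntegrable (fun t => (closedBall x0 ρ).indicator (fun _ => c) (γ t)) volume 0 L := by
  rw [intervalIntegrable_iff_integrableOn_Ioc_of_le hL]
  set T : Set ℝ := {t ∈ Icc 0 L | dist (γ t) x0 ≤ ρ} with hTdef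
  have hTclosed : IsClosed T := by
    have hfc : ContinuousOn (fun t => dist (γ t) x0) (Icc 0 L) :=
      (continuous_id.dist continuous_const).comp_continuousOn hγ.continuousOn
    have : T = Icc 0 L ∩ (fun t => dist (γ t) x0) ⁻¹' (Iic ρ) := by
      ext t; simp [hTdef, and_comm]
    rw [this]
    exact ContinuousOn.preimage_isClosed_of_isClosed hfc isClosed_Icc isClosed_Iic
  have hbase : IntegrableOn (T.indicator fun _ => c) (Ioc 0 L) volume := by
    apply Integrable.indicator _ hTclosed.measurableSet
    exact (integrableOn_const_iff).mpr (Or.inr (by simp))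
  apply hbase.congr_fun ?_ measurableSet_Ioc
  intro t ht
  by_cases hd : dist (γ t) x0 ≤ ρ
  · have h1 : t ∈ T := ⟨Ioc_subset_Icc_self ht, hd⟩
    have h2 : γ t ∈ closedBall x0 ρ := mem_closedBall.mpr hd
    simp [indicator_of_mem h1, indicator_of_mem h2]
  · have h1 : t ∉ T := fun hc => hd hc.2
    have h2 : γ t ∉ closedBall x0 ρ := fun hc => hd (mem_closedBall.mp hc)
    simp [indicator_of_notMem h1, indicator_of_notMem h2]

lemma ug_sum {Y : Type*} [MetricSpace Y] {ι : Type*} (s : Finset ι) (u g : ι → Y → ℝ)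
    (h : ∀ i ∈ s, IsUpperGradientOn (u i) (g i) Set.univ)
    (hint : ∀ i ∈ s, ∀ (L : ℝ) (γ : ℝ → Y), 0 ≤ L → LipschitzOnWith 1 γ (Set.Icc 0 L) →
      IntervalIntegrable (fun t => g i (γ t)) volume 0 L) :
    IsUpperGradientOn (fun x => ∑ i ∈ s, u i x) (fun x => ∑ i ∈ s, g i x) Set.univ := by
  intro L γ hL hγ hmaps
  calc |∑ i ∈ s, u i (γ L) - ∑ i ∈ s, u i (γ 0)|
      = |∑ i ∈ s, (u i (γ L) - u i (γ 0))| := by rw [Finset.sum_sub_distrib]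
    _ ≤ ∑ i ∈ s, |u i (γ L) - u i (γ 0)| := Finset.abs_sum_le_sum_abs _ _
    _ ≤ ∑ i ∈ s, ∫ t in (0:ℝ)..L, g i (γ t) :=
        Finset.sum_le_sum (fun i hi => h i hi L γ hL hγ hmaps)
    _ = ∫ t in (0:ℝ)..L, ∑ i ∈ s, g i (γ t) :=
        (intervalIntegral.integral_finset_sum (fun i hi => hint i hi L γ hL hγ)).symm

lemma ug_smul {Y : Type*} [MetricSpace Y] {u g : Y → ℝ} (c : ℝ) (hc : 0 ≤ c)
    (h : IsUpperGradientOn u g Set.univ) :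
    IsUpperGradientOn (fun x => c * u x) (fun x => c * g x) Set.univ := by
  intro L γ hL hγ hmaps
  rw [show c * u (γ L) - c * u (γ 0) = c * (u (γ L) - u (γ 0)) by ring, abs_mul,
    abs_of_nonneg hc, intervalIntegral.integral_const_mul]
  exact mul_le_mul_of_nonneg_left (h L γ hL hγ hmaps) hc

/-- if `liminf_{r→0+} μ(B(x₀,r))/r^p < ∞`, the variational `p`-capacity
of the condenser `({x₀}, Y \ B(x₀,r₀); Y)` vanishes. -/
theorem stmt4 {Y : Type*} [MetricSpace Y] [MeasurableSpace Y] [BorelSpace Y]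
    (μ : Measure Y) (p Cμ : ℝ) (hp : 1 < p) (hCμ : 1 ≤ Cμ) (hdb : IsDoubling μ Cμ)
    (x0 : Y) (r0 : ℝ) (hr0 : 0 < r0)
    (hliminf : Filter.liminf
        (fun r : ℝ => μ (Metric.ball x0 r) / ENNReal.ofReal (r ^ p))
        (nhdsWithin 0 (Set.Ioi 0)) < ⊤) :
    varCap μ p {x0} (Metric.ball x0 r0)ᶜ Set.univ = 0 := by
  classical
  have hp0 : (0:ℝ) < p := lt_trans one_pos hp
  -- choose K and the sequence of radii
  set K : ℝ≥0∞ := Filter.liminf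
      (fun r : ℝ => μ (Metric.ball x0 r) / ENNReal.ofReal (r ^ p))
      (nhdsWithin 0 (Set.Ioi 0)) + 1 with hKdef
  have hKtop : K ≠ ⊤ := by
    rw [hKdef]
    exact ENNReal.add_ne_top.mpr ⟨hliminf.ne, ENNReal.one_ne_top⟩
  have hfreq : ∃ᶠ r in nhdsWithin 0 (Set.Ioi 0),
      μ (Metric.ball x0 r) / ENNReal.ofReal (r ^ p) < K := by
    apply Filter.frequently_lt_of_liminf_lt
      (Filter.isCoboundedUnder_ge_of_le _ (fun i => le_top))
    exact ENNReal.lt_add_right hliminf.ne one_ne_zero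
  have hchoice : ∀ ε : ℝ, 0 < ε → ∃ r : ℝ, 0 < r ∧ r < ε ∧
      μ (Metric.ball x0 r) / ENNReal.ofReal (r ^ p) < K := by
    intro ε hε
    obtain ⟨r, hrI, hrK⟩ := Filter.frequently_iff.mp hfreq
      (Ioo_mem_nhdsGT_of_mem ⟨le_refl 0, hε⟩)
    exact ⟨r, hrI.1, hrI.2, hrK⟩
  choose F hF1 hF2 hF3 using hchoice
  let rs : ℕ → {x : ℝ // 0 < x} := fun n =>
    Nat.rec ⟨F r0 hr0, hF1 r0 hr0⟩ (fun _ prev => ⟨F (prev.1 / 2) (div_pos prev.2 two_pos),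
      hF1 _ _⟩) n
  set r : ℕ → ℝ := fun n => (rs n).1 with hrdef
  have hrpos : ∀ n, 0 < r n := fun n => (rs n).2
  have hr00 : r 0 < r0 := hF2 r0 hr0
  have hhalf : ∀ n, r (n + 1) < r n / 2 := fun n => hF2 ((rs n).1 / 2) (div_pos (rs n).2 two_pos)
  have hrK : ∀ n, μ (Metric.ball x0 (r n)) / ENNReal.ofReal (r n ^ p) < K := by
    intro n
    cases n with
    | zero => exact hF3 r0 hr0
    | succ m => exact hF3 ((rs m).1 / 2) (div_pos (rs m).2 two_pos)
  have hanti : ∀ n, r (n + 1) ≤ r n := fun n =>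
    (hhalf n).le.trans (by linarith [hrpos n])
  have hmono : ∀ i j, i ≤ j → r j ≤ r i := fun i j h =>
    (antitone_nat_of_succ_le hanti) h
  have hgeom : ∀ i k, r (i + k) ≤ (1 / 2) ^ k * r i := by
    intro i k
    induction k with
    | zero => simp
    | succ m ih =>
        calc r (i + (m + 1)) ≤ r (i + m) / 2 := (hhalf (i + m)).le
          _ ≤ ((1 / 2) ^ m * r i) / 2 := by linarith
          _ = (1 / 2) ^ (m + 1) * r i := by ring
  have hsum : ∀ i0, ∑ i ∈ Finset.range (i0 + 1), 1 / r i ≤ 2 / r i0 := by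
    intro i0
    have h1 : ∀ i ∈ Finset.range (i0 + 1), 1 / r i ≤ (1 / 2) ^ (i0 - i) * (1 / r i0) := by
      intro i hi
      rw [Finset.mem_range] at hi
      have hii : i ≤ i0 := Nat.lt_succ_iff.mp hi
      have hg := hgeom i (i0 - i)
      rw [Nat.add_sub_cancel' hii] at hg
      have h2 : 1 / r i ≤ (1 / 2) ^ (i0 - i) / r i0 := by
        rw [div_le_div_iff₀ (hrpos i) (hrpos i0)]
        calc 1 * r i0 = r i0 := one_mul _
          _ ≤ (1 / 2) ^ (i0 - i) * r i := hg
      exact h2.trans_eq (div_eq_mul_one_div _ _)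
    calc ∑ i ∈ Finset.range (i0 + 1), 1 / r i
        ≤ ∑ i ∈ Finset.range (i0 + 1), (1 / 2) ^ (i0 - i) * (1 / r i0) :=
          Finset.sum_le_sum h1
      _ = (∑ i ∈ Finset.range (i0 + 1), (1 / 2 : ℝ) ^ i) * (1 / r i0) := by
          rw [← Finset.sum_mul]
          congr 1
          exact (Finset.sum_congr rfl (fun i hi => by congr 1)).trans
            (Finset.sum_range_reflect (fun i => (1 / 2 : ℝ) ^ i) (i0 + 1))
      _ ≤ 2 * (1 / r i0) := by
          exact mul_le_mul_of_nonneg_right (sum_geometric_two_le _)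
            (one_div_nonneg.mpr (hrpos i0).le)
      _ = 2 / r i0 := by ring
  -- measure bounds
  have hμball : ∀ n, μ (Metric.ball x0 (r n)) ≤ K * ENNReal.ofReal (r n ^ p) := by
    intro n
    have hb0 : ENNReal.ofReal (r n ^ p) ≠ 0 := by
      simp only [ne_eq, ENNReal.ofReal_eq_zero, not_le]
      exact Real.rpow_pos_of_pos (hrpos n) p
    exact (ENNReal.div_le_iff hb0 ENNReal.ofReal_ne_top).mp (hrK n).le
  have hμcb : ∀ n, μ (Metric.closedBall x0 (r n)) ≤
      ENNReal.ofReal Cμ * (K * ENNReal.ofReal (r n ^ p)) := by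
    intro n
    calc μ (Metric.closedBall x0 (r n)) ≤ μ (Metric.ball x0 (2 * r n)) :=
          measure_mono (closedBall_subset_ball (by linarith [hrpos n]))
      _ ≤ ENNReal.ofReal Cμ * μ (Metric.ball x0 (r n)) := (hdb x0 (r n) (hrpos n)).2.1
      _ ≤ ENNReal.ofReal Cμ * (K * ENNReal.ofReal (r n ^ p)) :=
          mul_le_mul_right (hμball n) _
  -- main per-N bound
  have hcap : ∀ N : ℕ, 1 ≤ N → varCap μ p {x0} (Metric.ball x0 r0)ᶜ Set.univ ≤
      (N : ℝ≥0∞) * ENNReal.ofReal ((2 / (N : ℝ)) ^ p) * (ENNReal.ofReal Cμ * K) := by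
    intro N hN
    have hNR : (0:ℝ) < (N:ℝ) := by exact_mod_cast hN
    set uN : Y → ℝ := fun x => (1 / (N:ℝ)) * ∑ i ∈ Finset.range N,
      max 0 (1 - dist x x0 / r i) with huN
    set gN : Y → ℝ := fun x => (1 / (N:ℝ)) * ∑ i ∈ Finset.range N,
      (Metric.closedBall x0 (r i)).indicator (fun _ => 1 / r i) x with hgN
    have hmeas : Measurable gN :=
      ((Finset.measurable_sum _ (fun i _ =>
        measurable_const.indicator measurableSet_closedBall)).const_mul _)
    have hnn : ∀ x, 0 ≤ gN x := by
      intro x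
      apply mul_nonneg (by positivity)
      exact Finset.sum_nonneg fun i _ =>
        indicator_nonneg (fun _ _ => one_div_nonneg.mpr (hrpos i).le) _
    have hug : IsUpperGradientOn uN gN Set.univ := by
      apply ug_smul _ (by positivity)
      exact ug_sum _ _ _ (fun i _ => tent_ug x0 (hrpos i))
        (fun i _ L γ hL hγ => indic_integrable x0 (r i) (1 / r i) L hL γ hγ)
    have hE : ∀ x ∈ ({x0} : Set Y), 1 ≤ uN x := by
      intro x hx
      rw [mem_singleton_iff] at hx
      subst hx
      simp only [huN, dist_self, zero_div, sub_zero, max_eq_right zero_le_one,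
        Finset.sum_const, Finset.card_range, nsmul_eq_mul, mul_one]
      rw [one_div, inv_mul_cancel₀ (ne_of_gt hNR)]
    have hF : ∀ x ∈ (Metric.ball x0 r0)ᶜ, uN x ≤ 0 := by
      intro x hx
      have hd : r0 ≤ dist x x0 := by
        rw [mem_compl_iff, mem_ball] at hx
        linarith [not_lt.mp hx]
      have : ∀ i ∈ Finset.range N, max 0 (1 - dist x x0 / r i) = 0 := by
        intro i _
        apply max_eq_left
        rw [sub_nonpos, le_div_iff₀ (hrpos i), one_mul]
        calc r i ≤ r 0 := hmono 0 i (Nat.zero_le i)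
          _ ≤ r0 := hr00.le
          _ ≤ dist x x0 := hd
      rw [huN]
      simp only [Finset.sum_congr rfl this, Finset.sum_const, Finset.card_range, smul_zero,
        mul_zero]
      exact le_refl 0
    -- the capacity is at most the energy of gN
    have hle1 : varCap μ p {x0} (Metric.ball x0 r0)ᶜ Set.univ ≤
        ∫⁻ x, ENNReal.ofReal (gN x ^ p) ∂μ := by
      rw [varCap]
      refine iInf_le_of_le uN (iInf_le_of_le gN (iInf_le_of_le hmeas (iInf_le_of_le hnn
        (iInf_le_of_le hug (iInf_le_of_le hE (iInf_le_of_le hF ?_))))))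
      rw [Measure.restrict_univ]
    refine hle1.trans ?_
    -- pointwise bound
    set C : ℕ → ℝ≥0∞ := fun i => ENNReal.ofReal ((2 / ((N:ℝ) * r i)) ^ p) with hC
    have hptwise : ∀ x, ENNReal.ofReal (gN x ^ p) ≤
        ∑ i ∈ Finset.range N, (Metric.closedBall x0 (r i)).indicator (fun _ => C i) x := by
      intro x
      set d : ℝ := dist x x0 with hd
      by_cases hx : d ≤ r 0
      · set i0 : ℕ := Nat.findGreatest (fun i => d ≤ r i) (N - 1) with hi0
        have hPi0 : d ≤ r i0 := Nat.findGreatest_spec (P := fun i => d ≤ r i) (Nat.zero_le _) hx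
        have hi0N : i0 < N := by
          have := Nat.findGreatest_le (P := fun i => d ≤ r i) (N - 1)
          omega
        have hgt : ∀ i, i0 < i → i < N → ¬ d ≤ r i := by
          intro i h1 h2
          exact Nat.findGreatest_is_greatest h1 (by omega)
        have hsum_eq : ∑ i ∈ Finset.range N,
            (Metric.closedBall x0 (r i)).indicator (fun _ => 1 / r i) x
            = ∑ i ∈ Finset.range (i0 + 1), 1 / r i := by
          rw [← Finset.sum_subset (Finset.range_subset_range.mpr (by omega : i0 + 1 ≤ N))
            (fun i hiN hinot => ?_)]
          · exact Finset.sum_congr rfl (fun i hi => by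
              rw [Finset.mem_range, Nat.lt_succ_iff] at hi
              exact indicator_of_mem (mem_closedBall.mpr (hPi0.trans (hmono i i0 hi))) _)
          · rw [Finset.mem_range] at hiN hinot
            push_neg at hinot
            exact indicator_of_notMem
              (fun hc => hgt i (by omega) hiN (mem_closedBall.mp hc)) _
        have hgval : gN x ≤ 2 / ((N:ℝ) * r i0) := by
          rw [hgN]
          simp only
          rw [hsum_eq]
          calc (1 / (N:ℝ)) * ∑ i ∈ Finset.range (i0 + 1), 1 / r i
              ≤ (1 / (N:ℝ)) * (2 / r i0) :=
                mul_le_mul_of_nonneg_left (hsum i0) (by positivity)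
            _ = 2 / ((N:ℝ) * r i0) := by
                field_simp
        calc ENNReal.ofReal (gN x ^ p) ≤ C i0 := by
              rw [hC]
              exact ENNReal.ofReal_le_ofReal
                (Real.rpow_le_rpow (hnn x) hgval hp0.le)
          _ = (Metric.closedBall x0 (r i0)).indicator (fun _ => C i0) x := by
              rw [indicator_of_mem (mem_closedBall.mpr hPi0)]
          _ ≤ ∑ i ∈ Finset.range N,
              (Metric.closedBall x0 (r i)).indicator (fun _ => C i) x :=
              Finset.single_le_sum (f := fun i =>
                (Metric.closedBall x0 (r i)).indicator (fun _ => C i) x)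
                (fun i _ => zero_le) (Finset.mem_range.mpr hi0N)
      · have hzero : gN x = 0 := by
          rw [hgN]
          simp only
          rw [Finset.sum_congr rfl (fun i hi => indicator_of_notMem (fun hc => hx
            ((mem_closedBall.mp hc).trans (hmono 0 i (Nat.zero_le i)))) _)]
          simp
        rw [hzero, Real.zero_rpow (ne_of_gt hp0), ENNReal.ofReal_zero]
        exact zero_le
    -- integrate
    calc ∫⁻ x, ENNReal.ofReal (gN x ^ p) ∂μ
        ≤ ∫⁻ x, ∑ i ∈ Finset.range N,
            (Metric.closedBall x0 (r i)).indicator (fun _ => C i) x ∂μ :=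
          lintegral_mono hptwise
      _ = ∑ i ∈ Finset.range N, C i * μ (Metric.closedBall x0 (r i)) := by
          rw [lintegral_finset_sum _ (fun i _ =>
            measurable_const.indicator measurableSet_closedBall)]
          exact Finset.sum_congr rfl (fun i _ => by
            rw [lintegral_indicator measurableSet_closedBall, setLIntegral_const])
      _ ≤ ∑ i ∈ Finset.range N, ENNReal.ofReal ((2 / (N:ℝ)) ^ p) * (ENNReal.ofReal Cμ * K) := by
          apply Finset.sum_le_sum
          intro i _
          calc C i * μ (Metric.closedBall x0 (r i))
              ≤ C i * (ENNReal.ofReal Cμ * (K * ENNReal.ofReal (r i ^ p))) :=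
                mul_le_mul_right (hμcb i) _
            _ = (C i * ENNReal.ofReal (r i ^ p)) * (ENNReal.ofReal Cμ * K) := by ring
            _ = ENNReal.ofReal ((2 / (N:ℝ)) ^ p) * (ENNReal.ofReal Cμ * K) := by
                have hri : r i ≠ 0 := (hrpos i).ne'
                have hNne : (N:ℝ) ≠ 0 := ne_of_gt hNR
                congr 1
                rw [hC, ← ENNReal.ofReal_mul
                  (Real.rpow_nonneg (div_nonneg two_pos.le
                    (mul_nonneg hNR.le (hrpos i).le)) p),
                  ← Real.mul_rpow (div_nonneg two_pos.le
                    (mul_nonneg hNR.le (hrpos i).le)) (hrpos i).le]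
                congr 2
                field_simp
      _ = (N : ℝ≥0∞) * ENNReal.ofReal ((2 / (N:ℝ)) ^ p) * (ENNReal.ofReal Cμ * K) := by
          rw [Finset.sum_const, Finset.card_range, nsmul_eq_mul, mul_assoc]
  -- take the limit N → ∞
  have hA : Tendsto (fun N : ℕ => (N : ℝ≥0∞) * ENNReal.ofReal ((2 / (N:ℝ)) ^ p) *
      (ENNReal.ofReal Cμ * K)) atTop (𝓝 0) := by
    have h1 : Tendsto (fun N : ℕ => (N:ℝ) * (2 / (N:ℝ)) ^ p) atTop (𝓝 0) := by
      have h2 : Tendsto (fun N : ℕ => 2 ^ p * (N:ℝ) ^ (1 - p)) atTop (𝓝 0) := by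
        have h3 := (tendsto_rpow_neg_atTop (by linarith : (0:ℝ) < p - 1)).comp
          tendsto_natCast_atTop_atTop (α := ℕ)
        have h4 : Tendsto (fun N : ℕ => ((N:ℝ)) ^ (1 - p)) atTop (𝓝 0) := by
          simpa [Function.comp_def, neg_sub] using h3
        simpa using h4.const_mul ((2:ℝ) ^ p)
      apply h2.congr'
      filter_upwards [eventually_ge_atTop 1] with N hN1
      have hN : (0:ℝ) < (N:ℝ) := by exact_mod_cast hN1
      rw [Real.div_rpow (by norm_num) hN.le, Real.rpow_sub hN, Real.rpow_one]
      field_simp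
    have h5 : Tendsto (fun N : ℕ => ENNReal.ofReal ((N:ℝ) * (2 / (N:ℝ)) ^ p)) atTop (𝓝 0) := by
      have := ENNReal.tendsto_ofReal h1
      rwa [ENNReal.ofReal_zero] at this
    have h6 : Tendsto (fun N : ℕ => ENNReal.ofReal ((N:ℝ) * (2 / (N:ℝ)) ^ p) *
        (ENNReal.ofReal Cμ * K)) atTop (𝓝 0) := by
      have := ENNReal.Tendsto.mul_const (b := ENNReal.ofReal Cμ * K) h5
        (Or.inr (ENNReal.mul_ne_top ENNReal.ofReal_ne_top hKtop))
      rwa [zero_mul] at this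
    apply h6.congr
    intro N
    rw [← ENNReal.ofReal_natCast N, ← ENNReal.ofReal_mul (Nat.cast_nonneg N)]
  refine le_antisymm ?_ zero_le
  exact ge_of_tendsto hA (eventually_atTop.mpr ⟨1, hcap⟩)
end

section
/- Let $\rho:(0,\infty)\to(0,\infty)$ satisfy: (A) there is $C_A>0$ with $\rho(r)\le C_A\rho(s)$ whenever $0<r\le 2s+1$ and $0<s\le 2r+1$; and (B) there is $C_B>0$ with $\int_r^\infty \rho(t)\,dt \le C_B(r+1)\rho(r)$ for all $r>0$. Define $h(t):=(t+1)\rho(t)$ and $h^{-1}(\tau):=\inf\{t>0 : h(t)\le \tau\}$. Then $h^{-1}$ is doubling on small values: there is a constant $C$ depending only on $C_A$ and $C_B$ such that $h^{-1}(\tau) \le h^{-1}(\tau/2) \le C\, h^{-1}(\tau)$ for every $0<\tau\le \rho(1)/C_A$. -/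
open MeasureTheory Metric Set ENNReal Filter

/-- under conditions (A) and (B), the generalized inverse of
`h(t) = (t+1)ρ(t)` is doubling on small values, with constant depending only on
`C_A` and `C_B`. -/
theorem stmt6 (CA CB : ℝ) (hCA : 0 < CA) (hCB : 0 < CB) :
    ∃ C : ℝ, 0 < C ∧
      ∀ ρ : ℝ → ℝ, (∀ t : ℝ, 0 < t → 0 < ρ t) →
        (∀ r s : ℝ, 0 < r → 0 < s → r ≤ 2 * s + 1 → s ≤ 2 * r + 1 → ρ r ≤ CA * ρ s) →
        (∀ r : ℝ, 0 < r →
          ∫⁻ t in Set.Ioi r, ENNReal.ofReal (ρ t) ≤ ENNReal.ofReal (CB * (r + 1) * ρ r)) →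
        ∀ τ : ℝ, 0 < τ → τ ≤ ρ 1 / CA →
          sInf {t : ℝ | 0 < t ∧ (t + 1) * ρ t ≤ τ} ≤
            sInf {t : ℝ | 0 < t ∧ (t + 1) * ρ t ≤ τ / 2} ∧
          sInf {t : ℝ | 0 < t ∧ (t + 1) * ρ t ≤ τ / 2} ≤
            C * sInf {t : ℝ | 0 < t ∧ (t + 1) * ρ t ≤ τ} := by
  
  set θ : ℝ := max 0 (1 - 1/(CA*CB)) with hθdef
  have hθ0 : 0 ≤ θ := le_max_left _ _
  have hθ1 : θ < 1 := by
    apply max_lt one_pos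
    have : 0 < 1/(CA*CB) := by positivity
    linarith
  obtain ⟨n, hn⟩ := exists_pow_lt_of_lt_one (x := 1/(2*CA*CB)) (by positivity) hθ1
  refine ⟨2^(n+1), by positivity, ?_⟩
  intro ρ hρ hA hB τ hτ hτ'
  -- members of the τ-level set are > 1
  have hS1 : ∀ t : ℝ, 0 < t → (t+1) * ρ t ≤ τ → 1 < t := by
    intro t ht hle
    by_contra h
    push_neg at h
    have h1 : ρ 1 ≤ CA * ρ t := hA 1 t one_pos ht (by linarith) (by linarith)
    have h2 : τ ≤ ρ t := by
      calc τ ≤ ρ 1 / CA := hτ'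
        _ ≤ ρ t := by rw [div_le_iff₀ hCA]; linarith
    nlinarith [hρ t ht]
  set G : ℝ → ℝ := fun s => (∫⁻ t in Set.Ioi s, ENNReal.ofReal (ρ t)).toReal with hGdef
  have hGnn : ∀ s, 0 ≤ G s := fun s => ENNReal.toReal_nonneg
  have hGfin : ∀ s : ℝ, 0 < s → (∫⁻ t in Set.Ioi s, ENNReal.ofReal (ρ t)) ≠ ⊤ :=
    fun s hs => ne_top_of_le_ne_top ENNReal.ofReal_ne_top (hB s hs)
  have hGle : ∀ s : ℝ, 0 < s → G s ≤ CB * (s+1) * ρ s := by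
    intro s hs
    exact ENNReal.toReal_le_of_le_ofReal
      (by have := hρ s hs; positivity) (hB s hs)
  -- splitting lower bound
  have hsplit : ∀ s : ℝ, 0 < s → ((s+1) * ρ s) / CA + G (2*s+1) ≤ G s := by
    intro s hs
    have hdisj : Disjoint (Set.Ioc s (2*s+1)) (Set.Ioi (2*s+1)) := Set.Ioc_disjoint_Ioi le_rfl
    have hunion : Set.Ioc s (2*s+1) ∪ Set.Ioi (2*s+1) = Set.Ioi s :=
      Set.Ioc_union_Ioi_eq_Ioi (by linarith)
    have hsum : (∫⁻ t in Set.Ioi s, ENNReal.ofReal (ρ t))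
        = (∫⁻ t in Set.Ioc s (2*s+1), ENNReal.ofReal (ρ t))
          + (∫⁻ t in Set.Ioi (2*s+1), ENNReal.ofReal (ρ t)) := by
      rw [← hunion, lintegral_union measurableSet_Ioi hdisj]
    have hfinA : (∫⁻ t in Set.Ioc s (2*s+1), ENNReal.ofReal (ρ t)) ≠ ⊤ := by
      apply ne_top_of_le_ne_top (hGfin s hs)
      rw [hsum]; exact le_self_add
    have hlow : ENNReal.ofReal ((s+1) * (ρ s / CA))
        ≤ ∫⁻ t in Set.Ioc s (2*s+1), ENNReal.ofReal (ρ t) := by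
      have hpt : ∀ t ∈ Set.Ioc s (2*s+1), ENNReal.ofReal (ρ s / CA) ≤ ENNReal.ofReal (ρ t) := by
        intro t ht
        apply ENNReal.ofReal_le_ofReal
        have h := hA s t hs (lt_trans hs ht.1) (by linarith [ht.1]) ht.2
        rw [div_le_iff₀ hCA]
        nlinarith [hρ t (lt_trans hs ht.1)]
      calc ENNReal.ofReal ((s+1) * (ρ s / CA))
          = ENNReal.ofReal (ρ s / CA) * volume (Set.Ioc s (2*s+1)) := by
            rw [Real.volume_Ioc, show 2*s+1-s = s+1 by ring,
              ← ENNReal.ofReal_mul (by have := hρ s hs; positivity), mul_comm]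
        _ = ∫⁻ _t in Set.Ioc s (2*s+1), ENNReal.ofReal (ρ s / CA) := (setLIntegral_const _ _).symm
        _ ≤ _ := setLIntegral_mono' measurableSet_Ioc hpt
    have h1 : G s = (∫⁻ t in Set.Ioc s (2*s+1), ENNReal.ofReal (ρ t)).toReal + G (2*s+1) := by
      rw [hGdef]; simp only []
      rw [hsum, ENNReal.toReal_add hfinA (hGfin (2*s+1) (by linarith))]
    have h2 : (s+1) * (ρ s / CA) ≤ (∫⁻ t in Set.Ioc s (2*s+1), ENNReal.ofReal (ρ t)).toReal := by
      have := ENNReal.toReal_mono hfinA hlow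
      rwa [ENNReal.toReal_ofReal (by have := hρ s hs; positivity)] at this
    rw [h1]
    have : ((s+1) * ρ s) / CA = (s+1) * (ρ s / CA) := by ring
    linarith [this ▸ h2]
  -- pointwise: h(s) ≤ CA * G s
  have hpt : ∀ s : ℝ, 0 < s → (s+1) * ρ s ≤ CA * G s := by
    intro s hs
    have h1 := hsplit s hs
    have h2 := hGnn (2*s+1)
    rw [← div_le_iff₀' hCA]  -- maybe wrong name
    linarith
  -- one step contraction
  have hstep : ∀ s : ℝ, 0 < s → G (2*s+1) ≤ θ * G s := by
    intro s hs
    have h1 := hsplit s hs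
    have h2 := hGle s hs
    have h3 : G s / (CA*CB) ≤ ((s+1) * ρ s) / CA := by
      rw [div_le_div_iff₀ (by positivity) hCA]
      nlinarith
    have h4 : G (2*s+1) ≤ (1 - 1/(CA*CB)) * G s := by
      have h5 : G (2*s+1) ≤ G s - G s / (CA*CB) := by linarith
      have h6 : G s - G s / (CA*CB) = (1 - 1/(CA*CB)) * G s := by ring
      linarith [h6 ▸ h5]
    calc G (2*s+1) ≤ (1 - 1/(CA*CB)) * G s := h4
      _ ≤ θ * G s := mul_le_mul_of_nonneg_right (le_max_right _ _) (hGnn s)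
  -- iteration
  have main : ∀ s : ℝ, 0 < s → ∀ k : ℕ,
      0 < 2^k * (s+1) - 1 ∧ G (2^k * (s+1) - 1) ≤ θ^k * G s := by
    intro s hs k
    induction k with
    | zero => constructor <;> simp <;> linarith
    | succ k ih =>
      have hpos : 0 < 2^k * (s+1) - 1 := ih.1
      have heq : (2:ℝ)^(k+1) * (s+1) - 1 = 2 * (2^k * (s+1) - 1) + 1 := by ring
      rw [heq]
      refine ⟨by linarith, ?_⟩
      calc G (2 * (2^k * (s+1) - 1) + 1) ≤ θ * G (2^k * (s+1) - 1) := hstep _ hpos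
        _ ≤ θ * (θ^k * G s) := mul_le_mul_of_nonneg_left ih.2 hθ0
        _ = θ^(k+1) * G s := by ring
  -- each s in S(τ) yields an element of S(τ/2)
  have hmem2 : ∀ s : ℝ, 0 < s → (s+1) * ρ s ≤ τ →
      0 < 2^n * (s+1) - 1 ∧ (2^n * (s+1) - 1 + 1) * ρ (2^n * (s+1) - 1) ≤ τ/2 := by
    intro s hs hle
    obtain ⟨hpos, hGbd⟩ := main s hs n
    refine ⟨hpos, ?_⟩
    have h1 : (2^n * (s+1) - 1 + 1) * ρ (2^n * (s+1) - 1) ≤ CA * G (2^n * (s+1) - 1) :=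
      hpt _ hpos
    have h2 : G s ≤ CB * τ := by nlinarith [hGle s hs, hρ s hs]
    have hθn : (0:ℝ) ≤ θ^n := pow_nonneg hθ0 n
    have h3 : CA * G (2^n * (s+1) - 1) ≤ CA * (θ^n * (CB * τ)) := by
      have : G (2^n * (s+1) - 1) ≤ θ^n * (CB * τ) := by nlinarith [hGnn s]
      nlinarith
    have h5 : θ^n * (CA*CB) < 1/2 := by
      calc θ^n * (CA*CB) < (1/(2*CA*CB)) * (CA*CB) :=
            mul_lt_mul_of_pos_right hn (by positivity)
        _ = 1/2 := by field_simp
    have h4 : CA * (θ^n * (CB * τ)) ≤ τ/2 := by nlinarith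
    linarith
  by_cases hne : {t : ℝ | 0 < t ∧ (t + 1) * ρ t ≤ τ}.Nonempty
  · have hbdd : BddBelow {t : ℝ | 0 < t ∧ (t + 1) * ρ t ≤ τ} :=
      ⟨0, fun t ht => ht.1.le⟩
    have hbdd2 : BddBelow {t : ℝ | 0 < t ∧ (t + 1) * ρ t ≤ τ/2} :=
      ⟨0, fun t ht => ht.1.le⟩
    obtain ⟨s0, hs0⟩ := hne
    have hne' : {t : ℝ | 0 < t ∧ (t + 1) * ρ t ≤ τ}.Nonempty := ⟨s0, hs0⟩
    have hne2 : {t : ℝ | 0 < t ∧ (t + 1) * ρ t ≤ τ/2}.Nonempty :=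
      ⟨_, hmem2 s0 hs0.1 hs0.2⟩
    constructor
    · exact csInf_le_csInf hbdd hne2 (fun t ht => ⟨ht.1, le_trans ht.2 (by linarith)⟩)
    · have key : ∀ s ∈ {t : ℝ | 0 < t ∧ (t + 1) * ρ t ≤ τ},
          sInf {t : ℝ | 0 < t ∧ (t + 1) * ρ t ≤ τ/2} ≤ 2^(n+1) * s := by
        intro s hs
        have hm := hmem2 s hs.1 hs.2
        have h1s : 1 < s := hS1 s hs.1 hs.2
        have h2n : (1:ℝ) ≤ 2^n := one_le_pow₀ (by norm_num)
        calc sInf {t : ℝ | 0 < t ∧ (t + 1) * ρ t ≤ τ/2}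
            ≤ 2^n * (s+1) - 1 := csInf_le hbdd2 hm
          _ ≤ 2^(n+1) * s := by rw [pow_succ]; nlinarith
      have hlb : sInf {t : ℝ | 0 < t ∧ (t + 1) * ρ t ≤ τ/2} / 2^(n+1)
          ≤ sInf {t : ℝ | 0 < t ∧ (t + 1) * ρ t ≤ τ} := by
        apply le_csInf hne'
        intro s hs
        rw [div_le_iff₀ (by positivity)]
        nlinarith [key s hs]
      rw [div_le_iff₀ (by positivity)] at hlb
      nlinarith
  · rw [Set.not_nonempty_iff_eq_empty] at hne
    have he2 : {t : ℝ | 0 < t ∧ (t + 1) * ρ t ≤ τ/2} = ∅ := by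
      rw [Set.eq_empty_iff_forall_notMem]
      intro t ht
      have : t ∈ {t : ℝ | 0 < t ∧ (t + 1) * ρ t ≤ τ} := ⟨ht.1, by linarith [ht.2]⟩
      rw [hne] at this; exact this
    rw [hne, he2, Real.sInf_empty]
    norm_num
end

section
/- Let $(Z,d,\nu)$ be an unbounded metric measure space with $\nu$ doubling (constant $C_\nu$), uniformly perfect at base point $b$ with constant $\kappa>1$, and suppose $\rho:(0,\infty)\to(0,\infty)$ satisfies condition (A): $\rho(r)\le C_A\rho(s)$ whenever $0<r\le 2s+1$ and $0<s\le 2r+1$. Then there is a constant $c>0$ depending only on $C_\nu$, $\kappa$, $C_A$, and $q>0$ such that for every $r>0$, $\int_{Z\setminus B(b,r)} \rho(d(x,b))^{q}\,d\nu(x) \ge c\,\rho(r)^{q}\,\nu(B(b,r+1))$. -/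
open MeasureTheory Metric Set ENNReal Filter

/-- lower bound for the weighted measure of the complement of a ball,
under doubling, uniform perfectness at the base point, and condition (A). -/
theorem stmt9 (Cν κ CA q : ℝ) (hCν : 1 ≤ Cν) (hκ : 1 < κ) (hCA : 0 < CA) (hq : 0 < q) :
    ∃ c : ℝ, 0 < c ∧
      ∀ (Z : Type) [MetricSpace Z] [MeasurableSpace Z] [BorelSpace Z]
        (ν : Measure Z) (b : Z) (ρ : ℝ → ℝ),
        ¬ Bornology.IsBounded (Set.univ : Set Z) →
        IsDoubling ν Cν →
        (∀ r : ℝ, 0 < r → Metric.ball b r ≠ Set.univ →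
          ∃ z, z ∈ Metric.ball b (κ * r) ∧ z ∉ Metric.ball b r) →
        (∀ t : ℝ, 0 < t → 0 < ρ t) →
        (∀ r s : ℝ, 0 < r → 0 < s → r ≤ 2 * s + 1 → s ≤ 2 * r + 1 → ρ r ≤ CA * ρ s) →
        ∀ r : ℝ, 0 < r →
          ENNReal.ofReal (c * ρ r ^ q) * ν (Metric.ball b (r + 1)) ≤
            ∫⁻ x in (Metric.ball b r)ᶜ, ENNReal.ofReal (ρ (dist x b) ^ q) ∂ν := by

  obtain ⟨N, hN⟩ : ∃ N : ℕ, 2*κ+2 < 2^N := pow_unbounded_of_one_lt _ one_lt_two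
  have hCA' : (1:ℝ) ≤ max CA 1 := le_max_right _ _
  have hCANpos : (0:ℝ) < (max CA 1)^N := pow_pos (lt_of_lt_of_le one_pos hCA') N
  have hCAN : (0:ℝ) < ((max CA 1)^N)^q := Real.rpow_pos_of_pos hCANpos q
  have hCνN : (0:ℝ) < Cν^N := pow_pos (lt_of_lt_of_le one_pos hCν) N
  refine ⟨(((max CA 1)^N)^q * Cν^N)⁻¹, inv_pos.2 (mul_pos hCAN hCνN), ?_⟩
  intro Z _ _ _ ν b ρ hZ hdoub hperf hρpos hρA r hr
  have hρA' : ∀ a s : ℝ, 0 < a → 0 < s → a ≤ 2*s+1 → s ≤ 2*a+1 → ρ a ≤ (max CA 1) * ρ s :=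
    fun a s ha hs h1 h2 => le_trans (hρA a s ha hs h1 h2)
      (mul_le_mul_of_nonneg_right (le_max_left _ _) (hρpos s hs).le)
  -- chained condition (A)
  have hchain : ∀ n : ℕ, ∀ s t : ℝ, 0 < s → s ≤ t → t ≤ 2^n * (s+1) - 1 →
      ρ s ≤ (max CA 1)^n * ρ t := by
    intro n
    induction n with
    | zero =>
      intro s t hs hst ht
      norm_num at ht
      have : t = s := le_antisymm (by linarith) hst
      rw [this]; simp
    | succ n ih =>
      intro s t hs hst ht
      have h2n : (0:ℝ) < 2^n := by positivity
      have ht'pos : 0 < min t (2*s+1) := lt_min (lt_of_lt_of_le hs hst) (by linarith)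
      have hst' : s ≤ min t (2*s+1) := le_min hst (by linarith)
      have h1 : ρ s ≤ (max CA 1) * ρ (min t (2*s+1)) :=
        hρA' s _ hs ht'pos (by linarith) (min_le_right _ _)
      have hCAn1 : (1:ℝ) ≤ (max CA 1)^n := one_le_pow₀ hCA'
      have h2 : ρ (min t (2*s+1)) ≤ (max CA 1)^n * ρ t := by
        rcases le_total t (2*s+1) with h | h
        · rw [min_eq_left h]
          have hpt := hρpos t (lt_of_lt_of_le hs hst)
          nlinarith
        · rw [min_eq_right h]
          refine ih (2*s+1) t (by linarith) h ?_
          have e : (2:ℝ)^(n+1) = 2 * 2^n := by ring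
          rw [e] at ht
          nlinarith
      calc ρ s ≤ (max CA 1) * ρ (min t (2*s+1)) := h1
        _ ≤ (max CA 1) * ((max CA 1)^n * ρ t) :=
            mul_le_mul_of_nonneg_left h2 (by linarith)
        _ = (max CA 1)^(n+1) * ρ t := by ring
  -- iterated doubling
  have hiter : ∀ (x : Z) (t : ℝ), 0 < t → ∀ n : ℕ,
      ν (Metric.ball x (2^n * t)) ≤ ENNReal.ofReal (Cν^n) * ν (Metric.ball x t) := by
    intro x t ht n
    induction n with
    | zero => simp
    | succ n ih =>
      have key := (hdoub x (2^n*t) (by positivity)).2.1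
      have e : (2:ℝ)^(n+1) * t = 2 * (2^n * t) := by ring
      rw [e]
      calc ν (Metric.ball x (2*(2^n*t))) ≤ ENNReal.ofReal Cν * ν (Metric.ball x (2^n*t)) := key
        _ ≤ ENNReal.ofReal Cν * (ENNReal.ofReal (Cν^n) * ν (Metric.ball x t)) :=
            mul_le_mul_right ih _
        _ = ENNReal.ofReal (Cν^(n+1)) * ν (Metric.ball x t) := by
            rw [← mul_assoc, ← ENNReal.ofReal_mul (by linarith)]
            ring_nf
  -- uniform perfectness point at scale 2(r+1)
  have hball : Metric.ball b (2*(r+1)) ≠ Set.univ := by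
    intro h
    exact hZ (h ▸ Metric.isBounded_ball)
  obtain ⟨z, hz1, hz2⟩ := hperf (2*(r+1)) (by linarith) hball
  rw [Metric.mem_ball] at hz1
  have hz2' : 2*(r+1) ≤ dist z b := not_lt.1 (by simpa [Metric.mem_ball] using hz2)
  have h2N : 2*κ+2 < (2:ℝ)^N := hN
  have hr1 : (0:ℝ) < r + 1 := by linarith
  -- ball inclusions
  have hsub1 : Metric.ball b (r+1) ⊆ Metric.ball z (2^N * (r+1)) := by
    intro x hx
    rw [Metric.mem_ball] at hx ⊢
    have h1 : dist x z ≤ dist x b + dist b z := dist_triangle x b z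
    rw [dist_comm b z] at h1
    nlinarith [mul_lt_mul_of_pos_right h2N hr1]
  have hsub2 : Metric.ball z (r+1) ⊆ (Metric.ball b r)ᶜ := by
    intro x hx
    rw [Metric.mem_ball] at hx
    simp only [Set.mem_compl_iff, Metric.mem_ball, not_lt]
    have h1 : dist z b ≤ dist z x + dist x b := dist_triangle z x b
    rw [dist_comm z x] at h1
    linarith
  -- pointwise lower bound on ball z (r+1)
  have hpt : ∀ x ∈ Metric.ball z (r+1),
      ρ r ^ q / ((max CA 1)^N)^q ≤ ρ (dist x b) ^ q := by
    intro x hx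
    rw [Metric.mem_ball] at hx
    have h1 : dist z b ≤ dist z x + dist x b := dist_triangle z x b
    rw [dist_comm z x] at h1
    have hlb : r ≤ dist x b := by linarith
    have h2 : dist x b ≤ dist x z + dist z b := dist_triangle x z b
    have hub : dist x b ≤ 2^N * (r+1) - 1 := by
      nlinarith [mul_lt_mul_of_pos_right h2N hr1]
    have hch := hchain N r (dist x b) hr hlb hub
    have hρt : 0 < ρ (dist x b) := hρpos _ (lt_of_lt_of_le hr hlb)
    rw [div_le_iff₀ hCAN]
    calc ρ r ^ q ≤ ((max CA 1)^N * ρ (dist x b)) ^ q :=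
          Real.rpow_le_rpow (hρpos r hr).le hch hq.le
      _ = ((max CA 1)^N)^q * ρ (dist x b) ^ q := Real.mul_rpow hCANpos.le hρt.le
      _ = ρ (dist x b) ^ q * ((max CA 1)^N)^q := by ring
  have hρrq : (0:ℝ) ≤ ρ r ^ q := (Real.rpow_pos_of_pos (hρpos r hr) q).le
  have hlow : ENNReal.ofReal (ρ r ^ q / ((max CA 1)^N)^q) * ν (Metric.ball z (r+1)) ≤
      ∫⁻ x in (Metric.ball b r)ᶜ, ENNReal.ofReal (ρ (dist x b) ^ q) ∂ν := by
    calc ENNReal.ofReal (ρ r ^ q / ((max CA 1)^N)^q) * ν (Metric.ball z (r+1))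
        = ∫⁻ _ in Metric.ball z (r+1), ENNReal.ofReal (ρ r ^ q / ((max CA 1)^N)^q) ∂ν :=
          (setLIntegral_const _ _).symm
      _ ≤ ∫⁻ x in Metric.ball z (r+1), ENNReal.ofReal (ρ (dist x b) ^ q) ∂ν :=
          setLIntegral_mono' measurableSet_ball
            (fun x hx => ENNReal.ofReal_le_ofReal (hpt x hx))
      _ ≤ _ := lintegral_mono_set hsub2
  have hmeas : ν (Metric.ball b (r+1)) ≤ ENNReal.ofReal (Cν^N) * ν (Metric.ball z (r+1)) :=
    (measure_mono hsub1).trans (hiter z (r+1) hr1 N)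
  have hc : (0:ℝ) ≤ (((max CA 1)^N)^q * Cν^N)⁻¹ * ρ r ^ q :=
    mul_nonneg (inv_pos.2 (mul_pos hCAN hCνN)).le hρrq
  calc ENNReal.ofReal ((((max CA 1)^N)^q * Cν^N)⁻¹ * ρ r ^ q) * ν (Metric.ball b (r+1))
      ≤ ENNReal.ofReal ((((max CA 1)^N)^q * Cν^N)⁻¹ * ρ r ^ q) *
          (ENNReal.ofReal (Cν^N) * ν (Metric.ball z (r+1))) := mul_le_mul_right hmeas _
    _ = ENNReal.ofReal ((((max CA 1)^N)^q * Cν^N)⁻¹ * ρ r ^ q * Cν^N) *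
          ν (Metric.ball z (r+1)) := by
        rw [← mul_assoc, ← ENNReal.ofReal_mul hc]
    _ = ENNReal.ofReal (ρ r ^ q / ((max CA 1)^N)^q) * ν (Metric.ball z (r+1)) := by
        congr 1
        field_simp
    _ ≤ _ := hlow
end
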